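/- Let a₁,…,a_k be positive integers with gcd(a₁,…,a_k)=1. Then the Sylvester number n(a₁,…,a_k), i.e., the cardinality of NR(a₁,…,a_k), equals (1/a₁)·Σ_{i=1}^{a₁−1} m_i − (a₁−1)/2. -/

import Mathlib

open Finset

/-- `n` is representable as a nonnegative integer combination of the `a i`. -/
def Representable {k : ℕ} (a : Fin k → ℕ) (n : ℕ) : Prop :=
  ∃ x : Fin k → ℕ, n = ∑ i, x i * a i

/-- The set of positive integers that are not representable. -/
def NRset {k : ℕ} (a : Fin k → ℕ) : Set ℕ :=
  {n | 0 < n ∧ ¬ Representable a n}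

lemma rep_add {k : ℕ} {a : Fin k → ℕ} {n m : ℕ}
    (h1 : Representable a n) (h2 : Representable a m) : Representable a (n + m) := by
  obtain ⟨x, hx⟩ := h1; obtain ⟨y, hy⟩ := h2
  exact ⟨x + y, by simp [hx, hy, add_mul, Finset.sum_add_distrib]⟩

lemma rep_mul {k : ℕ} (a : Fin (k+1) → ℕ) (c : ℕ) : Representable a (c * a 0) := by
  refine ⟨fun j => if j = 0 then c else 0, ?_⟩
  rw [Finset.sum_eq_single 0] <;> simp +contextual

theorem stmt1 {k : ℕ} (a : Fin (k + 1) → ℕ)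
    (ha : ∀ i, 0 < a i)
    (hgcd : Finset.univ.gcd a = 1)
    (m : ℕ → ℕ)
    (hm : ∀ i ∈ Finset.Icc 1 (a 0 - 1),
      IsLeast {n : ℕ | 0 < n ∧ Representable a n ∧ n % (a 0) = i} (m i)) :
    ((NRset a).ncard : ℚ) =
      (1 / (a 0 : ℚ)) * ∑ i ∈ Finset.Icc 1 (a 0 - 1), (m i : ℚ)
        - ((a 0 : ℚ) - 1) / 2 := by
  have hApos : 0 < a 0 := ha 0
  obtain ⟨A, hA⟩ : ∃ A, a 0 = A := ⟨a 0, rfl⟩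
  rw [hA] at hm hApos ⊢
  have hrepA : ∀ c : ℕ, Representable a (c * A) := fun c => hA ▸ rep_mul a c
  -- residue-0 numbers are representable
  have hrep0 : ∀ n : ℕ, n % A = 0 → Representable a n := by
    intro n hn
    rw [← Nat.div_mul_cancel (Nat.dvd_of_mod_eq_zero hn)]
    exact hrepA _
  have hmmod : ∀ i ∈ Finset.Icc 1 (A - 1), m i % A = i := fun i hi => (hm i hi).1.2.2
  -- key: representable iff above m i
  have hkey : ∀ i ∈ Finset.Icc 1 (A - 1), ∀ n : ℕ, n % A = i →
      (Representable a n ↔ m i ≤ n) := by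
    intro i hi n hn
    have hi1 : 1 ≤ i := (Finset.mem_Icc.mp hi).1
    constructor
    · intro hrep
      have hnpos : 0 < n := lt_of_lt_of_le hi1 (hn ▸ Nat.mod_le n A)
      exact (hm i hi).2 ⟨hnpos, hrep, hn⟩
    · intro hle
      have hmod : m i % A = n % A := by rw [hn, hmmod i hi]
      have hdvd : A ∣ n - m i := (Nat.modEq_iff_dvd' hle).mp hmod
      obtain ⟨t, ht⟩ := hdvd
      rw [Nat.mul_comm] at ht
      have hle2 : m i ≤ n := hle
      have : n = m i + t * A := by omega
      rw [this]
      exact rep_add (hm i hi).1.2.1 (hrepA t)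
  -- NRset as a Finset
  set F : Finset ℕ := (Finset.Icc 1 (A - 1)).biUnion
      (fun i => (Finset.range (m i)).filter (fun n => n % A = i)) with hF
  have hset : NRset a = ↑F := by
    ext n
    simp only [NRset, Set.mem_setOf_eq, hF, Finset.coe_biUnion, Set.mem_iUnion,
      Finset.mem_coe, Finset.mem_filter, Finset.mem_range, Finset.coe_Icc, Set.mem_Icc]
    constructor
    · rintro ⟨hnpos, hnrep⟩
      refine ⟨n % A, ⟨?_, ?_⟩, ?_, rfl⟩
      · rcases Nat.eq_zero_or_pos (n % A) with h | h
        · exact absurd (hrep0 n h) hnrep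
        · exact h
      · have := Nat.mod_lt n hApos; omega
      · by_contra hge
        push_neg at hge
        have hmem : n % A ∈ Finset.Icc 1 (A - 1) := by
          rw [Finset.mem_Icc]
          rcases Nat.eq_zero_or_pos (n % A) with h | h
          · exact absurd (hrep0 n h) hnrep
          · have := Nat.mod_lt n hApos; omega
        exact hnrep ((hkey _ hmem n rfl).mpr hge)
    · rintro ⟨i, ⟨hi1, hi2⟩, hlt, hmod⟩
      have hmem : i ∈ Finset.Icc 1 (A - 1) := Finset.mem_Icc.mpr ⟨hi1, hi2⟩
      constructor
      · have := Nat.mod_le n A; omega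
      · intro hrep
        have := (hkey i hmem n hmod).mp hrep
        omega
  -- cardinality of each fiber
  have hfiber : ∀ i ∈ Finset.Icc 1 (A - 1),
      ((Finset.range (m i)).filter (fun n => n % A = i)).card = m i / A := by
    intro i hi
    have hi1 : 1 ≤ i := (Finset.mem_Icc.mp hi).1
    have hiA : i < A := by
      have := (Finset.mem_Icc.mp hi).2; omega
    have hmi : m i % A = i := hmmod i hi
    rw [← Finset.card_range (m i / A)]
    apply Finset.card_nbij' (fun n => n / A) (fun j => j * A + i)
    · intro n hn
      simp only [Finset.mem_coe, Finset.mem_filter, Finset.mem_range] at hn ⊢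
      obtain ⟨hlt, hmod⟩ := hn
      have h1 : n = A * (n / A) + i := by conv_lhs => rw [← Nat.div_add_mod n A, hmod]
      have h2 : m i = A * (m i / A) + i := by
        conv_lhs => rw [← Nat.div_add_mod (m i) A, hmi]
      have h3 : A * (n / A) < A * (m i / A) := by omega
      exact lt_of_mul_lt_mul_left h3 (Nat.zero_le A)
    · intro j hj
      simp only [Finset.mem_coe, Finset.mem_filter, Finset.mem_range] at hj ⊢
      have h2 : m i = A * (m i / A) + i := by
        conv_lhs => rw [← Nat.div_add_mod (m i) A, hmi]
      constructor
      · have : j + 1 ≤ m i / A := hj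
        calc j * A + i < (j + 1) * A := by nlinarith
          _ ≤ (m i / A) * A := Nat.mul_le_mul_right A this
          _ ≤ m i := by have hc := Nat.mul_comm A (m i / A); omega
      · rw [add_comm, Nat.add_mul_mod_self_right, Nat.mod_eq_of_lt hiA]
    · intro n hn
      simp only [Finset.mem_coe, Finset.mem_filter, Finset.mem_range] at hn
      conv_rhs => rw [← Nat.div_add_mod n A, hn.2]
      ring
    · intro j hj
      dsimp only; rw [add_comm, Nat.add_mul_div_right _ _ hApos, Nat.div_eq_of_lt hiA, zero_add]
  have hdisj : ∀ i ∈ Finset.Icc 1 (A-1), ∀ j ∈ Finset.Icc 1 (A-1), i ≠ j →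
      Disjoint ((Finset.range (m i)).filter (fun n => n % A = i))
        ((Finset.range (m j)).filter (fun n => n % A = j)) := by
    intro i _ j _ hij
    simp only [Finset.disjoint_left, Finset.mem_filter, Finset.mem_range]
    rintro n ⟨_, h1⟩ ⟨_, h2⟩
    exact hij (h1 ▸ h2)
  have hcard : (NRset a).ncard = ∑ i ∈ Finset.Icc 1 (A - 1), m i / A := by
    rw [hset, Set.ncard_coe_finset, hF, Finset.card_biUnion hdisj,
      Finset.sum_congr rfl hfiber]
  -- final algebra
  have hmi_eq : ∀ i ∈ Finset.Icc 1 (A - 1), (m i : ℚ) = A * (m i / A : ℕ) + i := by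
    intro i hi
    have h2 : A * (m i / A) + i = m i := by
      conv_rhs => rw [← Nat.div_add_mod (m i) A, hmmod i hi]
    conv_lhs => rw [← h2]
    push_cast; ring
  have hgauss : (∑ i ∈ Finset.Icc 1 (A - 1), (i : ℚ)) = A * ((A : ℚ) - 1) / 2 := by
    have hgn : (∑ i ∈ Finset.Icc 1 (A - 1), i) * 2 = A * (A - 1) := by
      have h0 : Finset.Icc 1 (A - 1) = Finset.Ico 1 A := by
        rw [← Finset.Ico_add_one_right_eq_Icc]; congr 1; omega
      have h1 : (∑ i ∈ Finset.range A, i) = ∑ i ∈ Finset.Ico 1 A, i := by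
        rw [Finset.range_eq_Ico, Finset.sum_eq_sum_Ico_succ_bot hApos]; simp
      rw [h0, ← h1, Finset.sum_range_id_mul_two]
    have := congrArg (fun x : ℕ => (x : ℚ)) hgn
    push_cast [Nat.cast_sub hApos] at this
    linarith
  rw [hcard]
  push_cast
  rw [Finset.sum_congr rfl hmi_eq, Finset.sum_add_distrib, ← Finset.mul_sum, hgauss]
  have hAne : (A : ℚ) ≠ 0 := by positivity
  field_simp
  ring
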